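/- For every t ∈ ℝ and every w > f'(t), the set Z = { t̄ > t : f(t) + w(t̄ − t) − (g/2)(t̄ − t)² = f(t̄) } is nonempty and has a minimum; that is, there is a smallest next impact time t̄ > t for the ball leaving the racket at time t with absolute velocity w. -/

import Mathlib

/-- For every `t` and every `w > f'(t)`, the set
`Z = { t̄ > t : f(t) + w(t̄ − t) − (g/2)(t̄ − t)² = f(t̄) }` is nonempty and has a
minimum (a smallest next impact time). -/
theorem next_impact_time_exists (g : ℝ) (hg : 0 < g)
    (f : ℝ → ℝ) (hf : ContDiff ℝ 3 f) (hper : ∀ t, f (t + 1) = f t)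
    (t w : ℝ) (hw : deriv f t < w) :
    ∃ tb : ℝ,
      IsLeast {s : ℝ | t < s ∧ f t + w * (s - t) - g / 2 * (s - t) ^ 2 = f s} tb := by
  set φ : ℝ → ℝ := fun s => f t + w * (s - t) - g / 2 * (s - t) ^ 2 - f s with hφdef
  have hfc : Continuous f := hf.continuous
  have hφc : Continuous φ := by fun_prop
  have hφt : φ t = 0 := by simp [hφdef]
  have hfd : HasDerivAt f (deriv f t) t :=
    ((hf.differentiable (by norm_num)) t).hasDerivAt
  have hφd : HasDerivAt φ (w - deriv f t) t := by
    have h1 : HasDerivAt (fun s : ℝ => s - t) 1 t := (hasDerivAt_id t).sub_const t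
    have h2 := ((h1.const_mul w).const_add (f t)).sub ((h1.pow 2).const_mul (g/2))
    have h3 := h2.sub hfd
    exact (by simpa using h3 : HasDerivAt (((fun x => f t + w * (x - t)) - fun y => g / 2 * (y - t) ^ 2) - f) (w - deriv f t) t)
  have hpos : ∀ᶠ s in nhdsWithin t (Set.Ioi t), 0 < φ s := by
    have h := hasDerivAt_iff_tendsto_slope.mp hφd
    have h' := h.mono_left (nhdsWithin_mono t (fun x hx => ne_of_gt hx))
    have he := h'.eventually (eventually_gt_nhds (show (0:ℝ) < w - deriv f t by linarith))
    filter_upwards [he, self_mem_nhdsWithin] with s hs hst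
    have hst' : t < s := hst
    have hmul := mul_pos hs (sub_pos.mpr hst')
    rw [slope_def_field, hφt, sub_zero, div_mul_cancel₀] at hmul
    · exact hmul
    · exact sub_ne_zero.mpr (ne_of_gt hst')
  obtain ⟨u, hu, hsub⟩ := mem_nhdsGT_iff_exists_Ioc_subset.mp hpos
  have hut : t < u := hu
  -- lower bound on f by periodicity
  obtain ⟨x0, hx0, hx0min⟩ := isCompact_Icc.exists_isMinOn
    (Set.nonempty_Icc.mpr (by norm_num : (0:ℝ) ≤ 1)) hfc.continuousOn
  have hp : Function.Periodic f 1 := hper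
  have hm : ∀ s, f x0 ≤ f s := by
    intro s
    obtain ⟨y, hy, hys⟩ := hp.exists_mem_Ico₀ (by norm_num) s
    rw [hys]
    exact hx0min ⟨hy.1, hy.2.le⟩
  -- pick large b with φ b < 0
  set A : ℝ := f t - f x0 with hA
  set u' : ℝ := max (u - t + 1) (2 * (|w| + |A| + 1) / g) with hu'
  set b : ℝ := t + u' with hb
  have hu'1 : (1:ℝ) ≤ u' := le_trans (by linarith) (le_max_left _ _)
  have hgu' : |w| + |A| + 1 ≤ g / 2 * u' := by
    have h2 : 2 * (|w| + |A| + 1) / g ≤ u' := le_max_right _ _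
    rw [div_le_iff₀ hg] at h2
    nlinarith
  have hφb : φ b < 0 := by
    have hfb := hm b
    have h1 : φ b ≤ A + w * u' - g / 2 * u' ^ 2 := by
      simp only [hφdef, hb, hA]
      ring_nf
      nlinarith [hm (t + u')]
    have h2 : A + w * u' - g / 2 * u' ^ 2 < 0 := by
      nlinarith [le_abs_self w, le_abs_self A, abs_nonneg w, abs_nonneg A,
        neg_abs_le w, neg_abs_le A]
    exact lt_of_le_of_lt h1 h2
  have hub : u ≤ b := by
    have : u - t + 1 ≤ u' := le_max_left _ _
    simp only [hb]; linarith
  have hφu : 0 < φ u := hsub ⟨hut, le_refl u⟩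
  -- IVT
  have hiv : (0:ℝ) ∈ φ '' Set.Icc u b :=
    intermediate_value_Icc' hub hφc.continuousOn ⟨hφb.le, hφu.le⟩
  obtain ⟨c, hc, hφcz⟩ := hiv
  -- characterize Z
  set Z : Set ℝ := {s : ℝ | t < s ∧ f t + w * (s - t) - g / 2 * (s - t) ^ 2 = f s} with hZ
  have hmemiff : ∀ s, s ∈ Z ↔ t < s ∧ φ s = 0 := by
    intro s
    simp only [hZ, Set.mem_setOf_eq, hφdef, sub_eq_zero]
  have hZeq : Z = {s | φ s = 0} ∩ Set.Ici u := by
    ext s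
    rw [hmemiff]
    constructor
    · rintro ⟨hts, hφs⟩
      refine ⟨hφs, ?_⟩
      by_contra hlt
      simp only [Set.mem_Ici, not_le] at hlt
      exact absurd hφs (ne_of_gt (hsub ⟨hts, hlt.le⟩))
    · rintro ⟨hφs, hsu⟩
      exact ⟨lt_of_lt_of_le hut hsu, hφs⟩
  have hcne : c ∈ Z := by
    rw [hZeq]
    exact ⟨hφcz, Set.mem_Ici.mpr hc.1⟩
  have hclosed : IsClosed Z := by
    rw [hZeq]
    exact (isClosed_eq hφc continuous_const).inter isClosed_Ici
  have hbdd : BddBelow Z := ⟨t, fun s hs => ((hmemiff s).mp hs).1.le⟩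
  exact ⟨sInf Z, hclosed.csInf_mem ⟨c, hcne⟩ hbdd, fun x hx => csInf_le hbdd hx⟩
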